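/- If the bivariate distribution of (V_1,V_2) with Uniform[0,1] margins satisfies P(V_1 ≤ t, V_2 ≤ t) = t^θ for all t ∈ [0,1] and some θ ∈ [1,2], then the madogram ν = (1/2)E[|V_1 - V_2|] equals θ/(1+θ) - 1/2. -/

import Mathlib

open MeasureTheory ProbabilityTheory Set

/-- `V` is uniformly distributed on `[0,1]`: its CDF on `[0,1]` is `t ↦ t`. -/
def IsUniform01 {Ω : Type*} [MeasurableSpace Ω] (μ : Measure Ω) (V : Ω → ℝ) : Prop :=
  Measurable V ∧ ∀ t ∈ Icc (0 : ℝ) 1, μ {ω | V ω ≤ t} = ENNReal.ofReal t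

section Aux

variable {Ω : Type*} [MeasurableSpace Ω] (μ : Measure Ω) [IsProbabilityMeasure μ]

lemma aux_integral_of_cdf (X : Ω → ℝ) (hX : Measurable X) (F : ℝ → ℝ)
    (hcdf : ∀ t ∈ Icc (0:ℝ) 1, μ {ω | X ω ≤ t} = ENNReal.ofReal (F t))
    (hF0 : F 0 = 0) (hF1 : F 1 = 1)
    (hFr : ∀ t ∈ Icc (0:ℝ) 1, F t ∈ Icc (0:ℝ) 1) :
    Integrable X μ ∧ ∫ ω, X ω ∂μ = ∫ t in Ioc (0:ℝ) 1, (1 - F t) := by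
  have h0 : μ {ω | X ω ≤ 0} = 0 := by
    simpa [hF0] using hcdf 0 (by norm_num)
  have h1 : μ {ω | X ω ≤ 1} = 1 := by
    simpa [hF1] using hcdf 1 (by norm_num)
  have hnn : 0 ≤ᵐ[μ] X := by
    have : μ {ω | ¬ 0 ≤ X ω} = 0 :=
      measure_mono_null (fun ω hω => le_of_lt (not_le.mp hω)) h0
    exact this
  have hle1 : X ≤ᵐ[μ] (fun _ => (1:ℝ)) := by
    have hms : MeasurableSet {ω | X ω ≤ 1} := hX measurableSet_Iic
    have : μ {ω | X ω ≤ 1}ᶜ = 0 := by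
      rw [prob_compl_eq_one_sub hms, h1, tsub_self]
    have h' : μ {ω | ¬ X ω ≤ 1} = 0 := this
    exact h'
  have hint : Integrable X μ := by
    refine (integrable_const (1:ℝ)).mono' hX.aestronglyMeasurable ?_
    filter_upwards [hnn, hle1] with ω h1' h2'
    rw [Real.norm_eq_abs, abs_of_nonneg h1']
    exact h2'
  refine ⟨hint, ?_⟩
  rw [hint.integral_eq_integral_Ioc_meas_le hnn hle1]
  apply integral_congr_ae
  filter_upwards [meas_le_ae_eq_meas_lt μ (volume.restrict (Ioc 0 1)) X,
    ae_restrict_mem measurableSet_Ioc] with t ht htmem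
  rw [measureReal_def, ht]
  have htI : t ∈ Icc (0:ℝ) 1 := ⟨le_of_lt htmem.1, htmem.2⟩
  have hms : MeasurableSet {ω | X ω ≤ t} := hX measurableSet_Iic
  have hcomp : {a : Ω | t < X a} = {ω | X ω ≤ t}ᶜ := by
    ext ω; simp [not_le]
  rw [hcomp, prob_compl_eq_one_sub hms, hcdf t htI]
  have hFt := hFr t htI
  rw [ENNReal.toReal_sub_of_le (by simpa using ENNReal.ofReal_le_one.mpr hFt.2) ENNReal.one_ne_top]
  simp [ENNReal.toReal_ofReal hFt.1]

end Aux

theorem madogram_extremal_coefficient {Ω : Type*} [MeasurableSpace Ω] (μ : Measure Ω)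
    [IsProbabilityMeasure μ] (V₁ V₂ : Ω → ℝ)
    (h₁ : IsUniform01 μ V₁) (h₂ : IsUniform01 μ V₂)
    (θ : ℝ) (hθ : θ ∈ Icc (1 : ℝ) 2)
    (hjoint : ∀ t ∈ Icc (0 : ℝ) 1, μ {ω | V₁ ω ≤ t ∧ V₂ ω ≤ t} = ENNReal.ofReal (t ^ θ)) :
    (1 / 2) * ∫ ω, |V₁ ω - V₂ ω| ∂μ = θ / (1 + θ) - 1 / 2 := by
  obtain ⟨hm₁, hc₁⟩ := h₁
  obtain ⟨hm₂, hc₂⟩ := h₂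
  have hθ0 : (0:ℝ) < θ := lt_of_lt_of_le one_pos hθ.1
  -- expectations of V₁, V₂
  have A₁ := aux_integral_of_cdf μ V₁ hm₁ id hc₁ rfl rfl (fun t ht => ht)
  have A₂ := aux_integral_of_cdf μ V₂ hm₂ id hc₂ rfl rfl (fun t ht => ht)
  -- expectation of max
  have hmmax : Measurable (fun ω => max (V₁ ω) (V₂ ω)) := hm₁.max hm₂
  have hcmax : ∀ t ∈ Icc (0:ℝ) 1,
      μ {ω | max (V₁ ω) (V₂ ω) ≤ t} = ENNReal.ofReal (t ^ θ) := by
    intro t ht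
    have : {ω | max (V₁ ω) (V₂ ω) ≤ t} = {ω | V₁ ω ≤ t ∧ V₂ ω ≤ t} := by
      ext ω; simp [max_le_iff]
    rw [this]; exact hjoint t ht
  have Amax := aux_integral_of_cdf μ (fun ω => max (V₁ ω) (V₂ ω)) hmmax
    (fun t => t ^ θ) hcmax (by simp [Real.zero_rpow (ne_of_gt hθ0)]) (by simp)
    (fun t ht => ⟨Real.rpow_nonneg ht.1 θ, Real.rpow_le_one ht.1 ht.2 (le_of_lt hθ0)⟩)
  obtain ⟨hint₁, hI₁⟩ := A₁
  obtain ⟨hint₂, hI₂⟩ := A₂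
  obtain ⟨hintM, hIM⟩ := Amax
  -- pointwise identity
  have hid : ∀ ω, |V₁ ω - V₂ ω|
      = 2 * max (V₁ ω) (V₂ ω) - V₁ ω - V₂ ω := by
    intro ω
    rcases le_total (V₁ ω) (V₂ ω) with h | h
    · rw [max_eq_right h, abs_of_nonpos (by linarith)]; ring
    · rw [max_eq_left h, abs_of_nonneg (by linarith)]; ring
  -- compute the integrals
  have hval₁ : ∫ ω, V₁ ω ∂μ = 1/2 := by
    rw [hI₁, ← intervalIntegral.integral_of_le (by norm_num : (0:ℝ) ≤ 1)]
    simp only [id]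
    rw [intervalIntegral.integral_sub intervalIntegrable_const intervalIntegral.intervalIntegrable_id]
    simp; norm_num
  have hval₂ : ∫ ω, V₂ ω ∂μ = 1/2 := by
    rw [hI₂, ← intervalIntegral.integral_of_le (by norm_num : (0:ℝ) ≤ 1)]
    simp only [id]
    rw [intervalIntegral.integral_sub intervalIntegrable_const intervalIntegral.intervalIntegrable_id]
    simp; norm_num
  have hθ1 : θ + 1 ≠ 0 := by positivity
  have hrpow : ∫ t in (0:ℝ)..1, t ^ θ = 1 / (θ + 1) := by
    rw [integral_rpow (Or.inl (by linarith : (-1:ℝ) < θ))]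
    rw [Real.one_rpow, Real.zero_rpow (by linarith : θ + 1 ≠ 0)]
    ring
  have hvalM : ∫ ω, max (V₁ ω) (V₂ ω) ∂μ = 1 - 1 / (θ + 1) := by
    rw [hIM, ← intervalIntegral.integral_of_le (by norm_num : (0:ℝ) ≤ 1)]
    have hii : IntervalIntegrable (fun t : ℝ => t ^ θ) volume 0 1 :=
      intervalIntegral.intervalIntegrable_rpow (Or.inl (by linarith))
    rw [intervalIntegral.integral_sub intervalIntegrable_const hii, hrpow]
    simp
  have hsplit : ∫ ω, |V₁ ω - V₂ ω| ∂μ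
      = 2 * (∫ ω, max (V₁ ω) (V₂ ω) ∂μ) - ∫ ω, V₁ ω ∂μ - ∫ ω, V₂ ω ∂μ := by
    calc ∫ ω, |V₁ ω - V₂ ω| ∂μ
        = ∫ ω, (2 * max (V₁ ω) (V₂ ω) - V₁ ω - V₂ ω) ∂μ := by
          exact integral_congr_ae (Filter.Eventually.of_forall (fun ω => hid ω))
      _ = 2 * (∫ ω, max (V₁ ω) (V₂ ω) ∂μ) - ∫ ω, V₁ ω ∂μ - ∫ ω, V₂ ω ∂μ := by
          have e2 : Integrable (fun ω => 2 * max (V₁ ω) (V₂ ω)) μ := hintM.const_mul 2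
          have e1 : Integrable (fun ω => 2 * max (V₁ ω) (V₂ ω) - V₁ ω) μ := e2.sub hint₁
          rw [integral_sub e1 hint₂, integral_sub e2 hint₁, integral_const_mul]
  rw [hsplit, hval₁, hval₂, hvalM]
  field_simp
  ring
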